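/- The subgroup of GL(n+1, F₂) stabilizing the first standard basis vector (isomorphic to Hol((Z/2)^n)) together with the permutation matrix swapping e₁ and e₂ generates all of GL(n+1, F₂); consequently this subgroup is a maximal subgroup of GL(n+1, F₂). -/

import Mathlib

open Matrix

theorem pairLI {V : Type*} [AddCommGroup V] [Module (ZMod 2) V] {x y : V}
    (hx : x ≠ 0) (hy : y ≠ 0) (hxy : x ≠ y) : LinearIndependent (ZMod 2) ![x, y] := by
  rw [LinearIndependent.pair_iff]
  intro s t h
  have hs : ∀ s : ZMod 2, s = 0 ∨ s = 1 := by decide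
  rcases hs s with rfl | rfl <;> rcases hs t with rfl | rfl <;>
    simp only [one_smul, zero_smul, add_zero, zero_add] at h ⊢
  · trivial
  · exact absurd h hy
  · exact absurd h hx
  · exfalso
    apply hxy
    have h2 : y + y = 0 := by
      rw [← two_smul (ZMod 2) y, show (2 : ZMod 2) = 0 from rfl, zero_smul]
    have := congrArg (· + y) h
    simp only [add_assoc, h2, add_zero, zero_add] at this
    exact this

theorem exists_equiv_pair {K V : Type*} [Field K] [AddCommGroup V] [Module K V]
    [FiniteDimensional K V]
    {x₁ x₂ y₁ y₂ : V} (h1 : LinearIndependent K ![x₁, x₂]) (h2 : LinearIndependent K ![y₁, y₂]) :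
    ∃ f : V ≃ₗ[K] V, f x₁ = y₁ ∧ f x₂ = y₂ := by
  set W₁ := Submodule.span K (Set.range ![x₁, x₂]) with hW₁
  set W₂ := Submodule.span K (Set.range ![y₁, y₂]) with hW₂
  obtain ⟨C₁, hC₁⟩ := Submodule.exists_isCompl W₁
  obtain ⟨C₂, hC₂⟩ := Submodule.exists_isCompl W₂
  let b₁ := Module.Basis.span h1
  let b₂ := Module.Basis.span h2
  have hr1 : Module.finrank K W₁ = 2 := by
    rw [hW₁, finrank_span_eq_card h1]; simp
  have hr2 : Module.finrank K W₂ = 2 := by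
    rw [hW₂, finrank_span_eq_card h2]; simp
  have hC : Module.finrank K C₁ = Module.finrank K C₂ := by
    have e1 := Submodule.finrank_add_eq_of_isCompl hC₁
    have e2 := Submodule.finrank_add_eq_of_isCompl hC₂
    omega
  let eqC : C₁ ≃ₗ[K] C₂ := LinearEquiv.ofFinrankEq _ _ hC
  let eqW : W₁ ≃ₗ[K] W₂ := b₁.equiv b₂ (Equiv.refl _)
  refine ⟨(Submodule.prodEquivOfIsCompl W₁ C₁ hC₁).symm ≪≫ₗ (eqW.prodCongr eqC) ≪≫ₗ
    Submodule.prodEquivOfIsCompl W₂ C₂ hC₂, ?_, ?_⟩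
  · have hx : x₁ = ((b₁ 0 : W₁) : V) := by rw [Module.Basis.span_apply]; rfl
    have hy : y₁ = ((b₂ 0 : W₂) : V) := by rw [Module.Basis.span_apply]; rfl
    rw [hx, hy]
    simp only [LinearEquiv.trans_apply, Submodule.prodEquivOfIsCompl_symm_apply_left,
      LinearEquiv.prodCongr_apply, Module.Basis.equiv_apply, Equiv.refl_apply,
      Submodule.coe_prodEquivOfIsCompl', map_zero]
    simp [eqW, eqC]
  · have hx : x₂ = ((b₁ 1 : W₁) : V) := by rw [Module.Basis.span_apply]; rfl
    have hy : y₂ = ((b₂ 1 : W₂) : V) := by rw [Module.Basis.span_apply]; rfl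
    rw [hx, hy]
    simp only [LinearEquiv.trans_apply, Submodule.prodEquivOfIsCompl_symm_apply_left,
      LinearEquiv.prodCongr_apply, Module.Basis.equiv_apply, Equiv.refl_apply,
      Submodule.coe_prodEquivOfIsCompl', map_zero]
    simp [eqW, eqC]

theorem single_comp_equiv {R : Type*} [CommRing R] {n : ℕ} (σ : Equiv.Perm (Fin (n + 1)))
    (a : Fin (n + 1)) :
    (Pi.single a (1 : R)) ∘ σ = Pi.single (σ.symm a) 1 := by
  funext j
  simp only [Function.comp_apply, Pi.single_apply]
  exact if_congr (by rw [Equiv.apply_eq_iff_eq_symm_apply]) rfl rfl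

noncomputable def glOf {K : Type*} [Field K] {n : ℕ}
    (f : (Fin (n+1) → K) ≃ₗ[K] (Fin (n+1) → K)) : GL (Fin (n + 1)) K :=
  ⟨LinearMap.toMatrix' (f : (Fin (n+1) → K) →ₗ[K] (Fin (n+1) → K)),
   LinearMap.toMatrix' (f.symm : (Fin (n+1) → K) →ₗ[K] (Fin (n+1) → K)),
   by rw [← LinearMap.toMatrix'_comp, LinearEquiv.comp_coe, LinearEquiv.symm_trans_self,
        LinearEquiv.refl_toLinearMap, LinearMap.toMatrix'_id],
   by rw [← LinearMap.toMatrix'_comp, LinearEquiv.comp_coe, LinearEquiv.self_trans_symm,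
        LinearEquiv.refl_toLinearMap, LinearMap.toMatrix'_id]⟩

theorem glOf_mulVec {K : Type*} [Field K] {n : ℕ}
    (f : (Fin (n+1) → K) ≃ₗ[K] (Fin (n+1) → K)) (v : Fin (n+1) → K) :
    (glOf f : Matrix (Fin (n+1)) (Fin (n+1)) K) *ᵥ v = f v := by
  show (LinearMap.toMatrix' (f : (Fin (n+1) → K) →ₗ[K] (Fin (n+1) → K))) *ᵥ v = f v
  rw [← Matrix.toLin'_apply, Matrix.toLin'_toMatrix']
  rfl

/-- The subgroup of `GL(n+1, R)` stabilizing the first standard basis vector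
`e₁` (matrices whose first column is `e₁`); it is isomorphic to `Hol(R^n)`. -/
def fixE1 (R : Type*) [CommRing R] (n : ℕ) : Subgroup (GL (Fin (n + 1)) R) where
  carrier := {A | (A : Matrix (Fin (n + 1)) (Fin (n + 1)) R) *ᵥ Pi.single 0 1 =
    Pi.single 0 1}
  one_mem' := by
    show (1 : Matrix (Fin (n + 1)) (Fin (n + 1)) R) *ᵥ Pi.single 0 1 = Pi.single 0 1
    rw [Matrix.one_mulVec]
  mul_mem' := by
    intro a b ha hb
    simp only [Set.mem_setOf_eq, Units.val_mul] at *
    rw [← Matrix.mulVec_mulVec, hb, ha]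
  inv_mem' := by
    intro a ha
    simp only [Set.mem_setOf_eq] at *
    conv_lhs => rw [← ha]
    rw [Matrix.mulVec_mulVec, ← Matrix.GeneralLinearGroup.coe_mul, inv_mul_cancel,
      Matrix.GeneralLinearGroup.coe_one, Matrix.one_mulVec]

/-- The permutation matrix swapping `e₁` and `e₂`, as an element of
`GL(n+1, R)`. -/
def swapGL (R : Type*) [CommRing R] (n : ℕ) : GL (Fin (n + 1)) R :=
  ⟨((Equiv.swap (0 : Fin (n + 1)) 1).toPEquiv.toMatrix : Matrix (Fin (n + 1)) (Fin (n + 1)) R),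
    ((Equiv.swap (0 : Fin (n + 1)) 1).toPEquiv.toMatrix : Matrix (Fin (n + 1)) (Fin (n + 1)) R),
    by
      rw [← PEquiv.toMatrix_trans, ← Equiv.toPEquiv_trans, Equiv.swap_swap,
        Equiv.toPEquiv_refl, PEquiv.toMatrix_refl],
    by
      rw [← PEquiv.toMatrix_trans, ← Equiv.toPEquiv_trans, Equiv.swap_swap,
        Equiv.toPEquiv_refl, PEquiv.toMatrix_refl]⟩

/-- The stabilizer of `e₁` in `GL(n+1, 𝔽₂)` (which is isomorphic to
`Hol((ℤ/2)^n)`) together with the permutation matrix swapping `e₁` and `e₂`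
generates all of `GL(n+1, 𝔽₂)`; consequently the stabilizer of `e₁` is a
maximal subgroup of `GL(n+1, 𝔽₂)`. -/
theorem swap_mulVec {R : Type*} [CommRing R] {n : ℕ} (u : Fin (n + 1) → R) :
    (swapGL R n : Matrix (Fin (n + 1)) (Fin (n + 1)) R) *ᵥ u = u ∘ (Equiv.swap 0 1) := by
  funext j
  simp [swapGL, Matrix.mulVec, dotProduct, PEquiv.toMatrix_apply,
    Equiv.toPEquiv_apply, eq_comm]

theorem fixE1_maximal (n : ℕ) (hn : 1 ≤ n) :
    Subgroup.closure
        ((fixE1 (ZMod 2) n : Set (GL (Fin (n + 1)) (ZMod 2))) ∪ {swapGL (ZMod 2) n}) = ⊤ ∧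
    IsCoatom (fixE1 (ZMod 2) n) := by
  have h01 : (0 : Fin (n + 1)) ≠ 1 := by
    intro h
    have := congrArg Fin.val h
    simp only [Fin.val_zero, Fin.val_one'] at this
    rw [Nat.mod_eq_of_lt (by omega)] at this
    omega
  have he10 : (Pi.single 0 1 : Fin (n + 1) → ZMod 2) ≠ 0 := by
    intro h
    have := congrFun h 0
    simp at this
  have he20 : (Pi.single 1 1 : Fin (n + 1) → ZMod 2) ≠ 0 := by
    intro h
    have := congrFun h 1
    simp at this
  have he12 : (Pi.single 0 1 : Fin (n + 1) → ZMod 2) ≠ Pi.single 1 1 := by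
    intro h
    have := congrFun h 0
    rw [Pi.single_eq_same, Pi.single_eq_of_ne h01] at this
    exact one_ne_zero this
  -- swap matrix facts
  have hswap2 : (swapGL (ZMod 2) n : Matrix (Fin (n+1)) (Fin (n+1)) (ZMod 2)) *ᵥ
      Pi.single 1 1 = Pi.single 0 1 := by
    rw [_root_.swap_mulVec, single_comp_equiv, Equiv.symm_swap, Equiv.swap_apply_right]
  have hswap1 : (swapGL (ZMod 2) n : Matrix (Fin (n+1)) (Fin (n+1)) (ZMod 2)) *ᵥ
      Pi.single 0 1 = Pi.single 1 1 := by
    rw [_root_.swap_mulVec, single_comp_equiv, Equiv.symm_swap, Equiv.swap_apply_left]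
  have key : ∀ v : Fin (n+1) → ZMod 2, v ≠ 0 → v ≠ Pi.single 0 1 →
      ∃ A : GL (Fin (n+1)) (ZMod 2), A ∈ fixE1 (ZMod 2) n ∧
        (A : Matrix (Fin (n+1)) (Fin (n+1)) (ZMod 2)) *ᵥ v = Pi.single 1 1 := by
    intro v hv0 hv1
    obtain ⟨f, hf1, hf2⟩ := exists_equiv_pair (pairLI he10 hv0 (fun h => hv1 h.symm))
      (pairLI he10 he20 he12)
    refine ⟨glOf f, ?_, ?_⟩
    · show (glOf f : Matrix (Fin (n+1)) (Fin (n+1)) (ZMod 2)) *ᵥ Pi.single 0 1 = Pi.single 0 1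
      rw [glOf_mulVec, hf1]
    · rw [glOf_mulVec, hf2]
  have step : ∀ g : GL (Fin (n+1)) (ZMod 2), g ∉ fixE1 (ZMod 2) n →
      ∃ A ∈ fixE1 (ZMod 2) n, swapGL (ZMod 2) n * A * g ∈ fixE1 (ZMod 2) n := by
    intro g hg
    have hv0 : (g : Matrix (Fin (n+1)) (Fin (n+1)) (ZMod 2)) *ᵥ Pi.single 0 1 ≠ 0 := by
      intro h
      apply he10
      have : ((g⁻¹ : GL (Fin (n+1)) (ZMod 2)) : Matrix (Fin (n+1)) (Fin (n+1)) (ZMod 2)) *ᵥ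
          ((g : Matrix (Fin (n+1)) (Fin (n+1)) (ZMod 2)) *ᵥ Pi.single 0 1) = 0 := by
        rw [h, Matrix.mulVec_zero]
      rwa [Matrix.mulVec_mulVec, ← Matrix.GeneralLinearGroup.coe_mul, inv_mul_cancel,
        Matrix.GeneralLinearGroup.coe_one, Matrix.one_mulVec] at this
    have hv1 : (g : Matrix (Fin (n+1)) (Fin (n+1)) (ZMod 2)) *ᵥ Pi.single 0 1 ≠
        Pi.single 0 1 := hg
    obtain ⟨A, hA, hAv⟩ := key _ hv0 hv1
    refine ⟨A, hA, ?_⟩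
    show ((swapGL (ZMod 2) n * A * g : GL (Fin (n+1)) (ZMod 2)) :
        Matrix (Fin (n+1)) (Fin (n+1)) (ZMod 2)) *ᵥ Pi.single 0 1 = Pi.single 0 1
    rw [Units.val_mul, Units.val_mul, ← Matrix.mulVec_mulVec, ← Matrix.mulVec_mulVec,
      hAv, hswap2]
  have hclosure : Subgroup.closure
      ((fixE1 (ZMod 2) n : Set (GL (Fin (n + 1)) (ZMod 2))) ∪ {swapGL (ZMod 2) n}) = ⊤ := by
    rw [Subgroup.eq_top_iff']
    intro g
    by_cases hg : g ∈ fixE1 (ZMod 2) n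
    · exact Subgroup.subset_closure (Or.inl hg)
    · obtain ⟨A, hA, hh⟩ := step g hg
      have hgeq : g = A⁻¹ * (swapGL (ZMod 2) n)⁻¹ * (swapGL (ZMod 2) n * A * g) := by group
      rw [hgeq]
      exact mul_mem (mul_mem (inv_mem (Subgroup.subset_closure (Or.inl hA)))
        (inv_mem (Subgroup.subset_closure (Or.inr rfl))))
        (Subgroup.subset_closure (Or.inl hh))
  refine ⟨hclosure, ?_, ?_⟩
  · -- fixE1 ≠ ⊤
    intro h
    have hmem : swapGL (ZMod 2) n ∈ fixE1 (ZMod 2) n := h ▸ Subgroup.mem_top _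
    have h2 : (swapGL (ZMod 2) n : Matrix (Fin (n+1)) (Fin (n+1)) (ZMod 2)) *ᵥ
        Pi.single 0 1 = Pi.single 0 1 := hmem
    rw [hswap1] at h2
    exact he12 h2.symm
  · intro K hK
    obtain ⟨g, hgK, hg⟩ := SetLike.exists_of_lt hK
    obtain ⟨A, hA, hh⟩ := step g hg
    have hAK : A ∈ K := hK.le hA
    have hhK : swapGL (ZMod 2) n * A * g ∈ K := hK.le hh
    have hsK : swapGL (ZMod 2) n ∈ K := by
      have : swapGL (ZMod 2) n = (swapGL (ZMod 2) n * A * g) * g⁻¹ * A⁻¹ := by group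
      rw [this]
      exact mul_mem (mul_mem hhK (inv_mem hgK)) (inv_mem hAK)
    have hle : Subgroup.closure
        ((fixE1 (ZMod 2) n : Set (GL (Fin (n + 1)) (ZMod 2))) ∪ {swapGL (ZMod 2) n}) ≤ K :=
      (Subgroup.closure_le K).mpr (Set.union_subset hK.le (Set.singleton_subset_iff.mpr hsK))
    rw [hclosure] at hle
    exact top_unique hle
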